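/- Let x = x₂ b₂ a^{k₂} x₃ b₁ a^{k₁} be a string of length m, where x₂, x₃ ∈ Σ*, a, b₁, b₂ ∈ Σ with b₁ ≠ a and b₂ ≠ a, and k₁, k₂ ≥ 1 are integers with k₂ < k₁. Let ℓ₂ = |x₂ b₂| and r₂ = |x₂ b₂ a^{k₂}| - 1. Then for every position i with ℓ₂ ≤ i ≤ r₂, suff[i] = i - ℓ₂ + 1. -/

import Mathlib

/-- `suffT x i` is the length of the longest common suffix of `x` and `x[0..i]`,
i.e. the largest `k` with `0 ≤ k ≤ i+1` such that `x[i-k+1..i] = x[m-k..m-1]`. -/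
def suffT {α : Type*} [DecidableEq α] (x : List α) (i : ℕ) : ℕ :=
  Nat.findGreatest
    (fun k => (x.take (i + 1)).drop (i + 1 - k) = x.drop (x.length - k)) (i + 1)

/-- `Cond-suf(i,d)`: either `0 < d ≤ i+1` and `x[i-d+1..m-d-1]` is a suffix of `x`,
or `i+1 < d` and `x[0..m-d-1]` is a suffix of `x`. -/
def CondSuf {α : Type*} (x : List α) (i d : ℕ) : Prop :=
  (0 < d ∧ d ≤ i + 1 ∧ (x.drop (i + 1 - d)).take (x.length - 1 - i) <:+ x) ∨
  (i + 1 < d ∧ x.take (x.length - d) <:+ x)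

/-- `Cond-occ(i,d)`: either `0 < d ≤ i` and `x[i-d] ≠ x[i]`, or `i < d`. -/
def CondOcc {α : Type*} (x : List α) (i d : ℕ) : Prop :=
  (0 < d ∧ d ≤ i ∧ x[i - d]? ≠ x[i]?) ∨ i < d

/-- `goodSuff x i = min { d | Cond-suf(i,d) and Cond-occ(i,d) }`. -/
noncomputable def goodSuff {α : Type*} (x : List α) (i : ℕ) : ℕ :=
  sInf {d | CondSuf x i d ∧ CondOcc x i d}

/-- Let `x = x₂ b₂ a^{k₂} x₃ b₁ a^{k₁}` with `b₁ ≠ a`, `b₂ ≠ a`,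
`k₁, k₂ ≥ 1`, `k₂ < k₁`. Let `ℓ₂ = |x₂ b₂|` and `r₂ = |x₂ b₂ a^{k₂}| - 1`.
Then for every position `i` with `ℓ₂ ≤ i ≤ r₂`, `suff[i] = i - ℓ₂ + 1`. -/
theorem statement3 {α : Type*} [DecidableEq α] (x₂ x₃ : List α) (a b₁ b₂ : α) (k₁ k₂ : ℕ)
    (hb₁ : b₁ ≠ a) (hb₂ : b₂ ≠ a) (hk₁ : 1 ≤ k₁) (hk₂ : 1 ≤ k₂) (hkk : k₂ < k₁)
    (x : List α)
    (hx : x = x₂ ++ [b₂] ++ List.replicate k₂ a ++ x₃ ++ [b₁] ++ List.replicate k₁ a)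
    (i : ℕ) (hℓ : x₂.length + 1 ≤ i) (hr : i ≤ x₂.length + 1 + k₂ - 1) :
    suffT x i = i - (x₂.length + 1) + 1 := by
  have hL : i - (x₂.length + 1) + 1 = i - x₂.length := by omega
  rw [hL]
  subst hx
  set x := x₂ ++ [b₂] ++ List.replicate k₂ a ++ x₃ ++ [b₁] ++ List.replicate k₁ a with hxdef
  have hlen : x.length = x₂.length + 1 + k₂ + x₃.length + 1 + k₁ := by
    simp [hxdef]; omega
  set L := x₂.length with hLdef
  set j := i - L with hjdef
  have hj1 : 1 ≤ j := by omega
  have hjk : j ≤ k₂ := by omega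
  -- key getElem facts
  have hxL : x[L]? = some b₂ := by
    have : x = x₂ ++ ([b₂] ++ (List.replicate k₂ a ++ x₃ ++ [b₁] ++ List.replicate k₁ a)) := by
      simp [hxdef, List.append_assoc]
    rw [this, List.getElem?_append_right (by omega)]
    simp [hLdef]
  have hxA : x[x.length - 1 - j]? = some a := by
    have hidx : x.length - 1 - j = L + 1 + k₂ + x₃.length + 1 + (k₁ - 1 - j) := by omega
    have hdec : x = (x₂ ++ [b₂] ++ List.replicate k₂ a ++ x₃ ++ [b₁]) ++ List.replicate k₁ a := by
      simp [hxdef, List.append_assoc]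
    have hplen : (x₂ ++ [b₂] ++ List.replicate k₂ a ++ x₃ ++ [b₁]).length = L + 1 + k₂ + x₃.length + 1 := by
      simp; omega
    rw [hidx, hdec, List.getElem?_append_right (by rw [hplen]; omega), hplen,
      List.getElem?_replicate, if_pos (by omega)]
  rw [suffT, Nat.findGreatest_eq_iff]
  refine ⟨by omega, fun _ => ?_, fun k hk1 hk2 hP => ?_⟩
  · -- the predicate holds at j
    show (x.take (i + 1)).drop (i + 1 - j) = x.drop (x.length - j)
    have h1 : (x.take (i + 1)).drop (i + 1 - j) = List.replicate j a := by
      rw [List.drop_take]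
      have : i + 1 - j = L + 1 := by omega
      rw [this]
      have hdec : x = (x₂ ++ [b₂]) ++ (List.replicate k₂ a ++ (x₃ ++ [b₁] ++ List.replicate k₁ a)) := by
        simp [hxdef, List.append_assoc]
      rw [hdec, List.drop_left' (by simp [hLdef])]
      rw [List.take_append_of_le_length (by simp; omega), List.take_replicate]
      congr 1; omega
    have h2 : x.drop (x.length - j) = List.replicate j a := by
      have hdec : x = (x₂ ++ [b₂] ++ List.replicate k₂ a ++ x₃ ++ [b₁]) ++ List.replicate k₁ a := by
        simp [hxdef, List.append_assoc]
      have hplen : (x₂ ++ [b₂] ++ List.replicate k₂ a ++ x₃ ++ [b₁]).length = L + 1 + k₂ + x₃.length + 1 := by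
        simp; omega
      have : x.length - j = (x₂ ++ [b₂] ++ List.replicate k₂ a ++ x₃ ++ [b₁]).length + (k₁ - j) := by
        rw [hplen]; omega
      rw [this]
      conv_lhs => rw [hdec]
      rw [List.drop_length_add_append, List.drop_replicate]
      congr 1; omega
    rw [h1, h2]
  · -- the predicate fails above j
    have := congrArg (·[k - 1 - j]?) hP
    simp only [List.getElem?_drop, List.getElem?_take] at this
    rw [if_pos (by omega)] at this
    have e1 : i + 1 - k + (k - 1 - j) = L := by omega
    have e2 : x.length - k + (k - 1 - j) = x.length - 1 - j := by
      have : k ≤ x.length := by omega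
      omega
    rw [e1, e2, hxL, hxA] at this
    exact hb₂ (Option.some_injective _ this)
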